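/- For every t ≥ 0, there exist constants h_1(t), h_2(t) > 0 such that for all integers k, p ≥ 1: h_2(t) · I_{k,r}(t) · I_{p,r}(t) ≤ I_{k+p,r}(t) ≤ h_1(t) · I_{k,r}(t) · I_{p,r}(t). -/

import Mathlib

open Filter MeasureTheory
open scoped BigOperators ENNReal NNReal Topology

namespace LGQ

noncomputable section

/-- The alphabet `G = {(i,j) : 1 ≤ i ≤ n_j, 1 ≤ j ≤ m}`, encoded as a sigma type:
an element is `⟨j, i⟩` with `j : Fin m` (the `y`-coordinate) and `i : Fin (n j)`. -/
abbrev Alph (m : ℕ) (n : Fin m → ℕ) := Σ j : Fin m, Fin (n j)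

/-- A pair `σ = (σ_L, σ_R)` with `σ_L ∈ G^*` and `σ_R ∈ G_y^*`. -/
abbrev Wd (m : ℕ) (n : Fin m → ℕ) := List (Alph m n) × List (Fin m)

variable {m : ℕ} {n : Fin m → ℕ}

/-- `a_ω := ∏ a_{i_h j_h}` along a word `ω ∈ G^*`. -/
def aP (a : Alph m n → ℝ) (w : List (Alph m n)) : ℝ := (w.map a).prod

/-- `b_τ := ∏ b_{j_h}` along a word `τ ∈ G_y^*`. -/
def bP (b : Fin m → ℝ) (τ : List (Fin m)) : ℝ := (τ.map b).prod

/-- `σ_y := (σ_L)_y ∗ σ_R` : the `y`-word of a pair `σ = σ_L ∗ σ_R`. -/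
def sy (σ : Wd m n) : List (Fin m) := σ.1.map Sigma.fst ++ σ.2

/-- `Ψ_l := {σ = σ_L ∗ σ_R : σ_L ∈ G^l, σ_R ∈ G_y^*, b_{(σ_y)^-} ≥ a_{σ_L} > b_{σ_y}}`. -/
def Psi (a : Alph m n → ℝ) (b : Fin m → ℝ) (l : ℕ) : Set (Wd m n) :=
  {σ | σ.1.length = l ∧ 1 ≤ σ.2.length ∧
    aP a σ.1 ≤ bP b (sy σ).dropLast ∧ bP b (sy σ) < aP a σ.1}

/-- `Ψ^* := ⋃_{l ≥ 1} Ψ_l`. -/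
def PsiStar (a : Alph m n → ℝ) (b : Fin m → ℝ) : Set (Wd m n) :=
  {σ | ∃ l, 1 ≤ l ∧ σ ∈ Psi a b l}

/-- `q_j := Σ_{i=1}^{n_j} p_{ij}`. -/
def qf (p : Alph m n → ℝ) (j : Fin m) : ℝ := ∑ i : Fin (n j), p ⟨j, i⟩

/-- `p_{σ_L} := ∏ p_{i_h j_h}`. -/
def pP (p : Alph m n → ℝ) (w : List (Alph m n)) : ℝ := (w.map p).prod

/-- `q_{σ_R} := ∏ q_{j_h}`. -/
def qP (p : Alph m n → ℝ) (τ : List (Fin m)) : ℝ := (τ.map (qf p)).prod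

/-- `E_r(σ) := p_{σ_L} q_{σ_R} a_{σ_L}^r` (note `E_r(θ) = 1`). -/
def Er (a p : Alph m n → ℝ) (r : ℝ) (σ : Wd m n) : ℝ :=
  pP p σ.1 * qP p σ.2 * aP a σ.1 ^ r

/-- `a̲ := min a_{ij}`. -/
def aLo (a : Alph m n → ℝ) : ℝ := ⨅ g, a g

/-- `ā := max a_{ij}`. -/
def aHi (a : Alph m n → ℝ) : ℝ := ⨆ g, a g

/-- `b̲ := min b_j`. -/
def bLo (b : Fin m → ℝ) : ℝ := ⨅ j, b j

/-- `b̄ := max b_j`. -/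
def bHi (b : Fin m → ℝ) : ℝ := ⨆ j, b j

/-- `p̲ := min p_{ij}`. -/
def pLo (p : Alph m n → ℝ) : ℝ := ⨅ g, p g

/-- `q̲ := min q_j`. -/
def qLo (p : Alph m n → ℝ) : ℝ := ⨅ j, qf p j

/-- `A_1 := ⌊log a̲ / log b̄⌋ + 1`. -/
def A1 (a : Alph m n → ℝ) (b : Fin m → ℝ) : ℤ :=
  ⌊Real.log (aLo a) / Real.log (bHi b)⌋ + 1

/-- `A_2 := ⌊log b̲ / log ā⌋ + 1`. -/
def A2 (a : Alph m n → ℝ) (b : Fin m → ℝ) : ℤ :=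
  ⌊Real.log (bLo b) / Real.log (aHi a)⌋ + 1

/-- `A_3 := max_{(i,j)∈G} a_{ij}/b_j`. -/
def A3 (a : Alph m n → ℝ) (b : Fin m → ℝ) : ℝ := ⨆ g : Alph m n, a g / b g.1

/-- `A_4 := log A_3 / log b̲`. -/
def A4 (a : Alph m n → ℝ) (b : Fin m → ℝ) : ℝ := Real.log (A3 a b) / Real.log (bLo b)

/-- `A_6 := ⌊1/A_4⌋`. -/
def A6 (a : Alph m n → ℝ) (b : Fin m → ℝ) : ℤ := ⌊1 / A4 a b⌋

/-- `η̲_r := p̲ q̲^{A_1} a̲^r`. -/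
def etaLo (a : Alph m n → ℝ) (b : Fin m → ℝ) (p : Alph m n → ℝ) (r : ℝ) : ℝ :=
  pLo p * qLo p ^ A1 a b * aLo a ^ r

/-- `A_{5,r} := ⌊log(q̲² η̲_r)/(r·log ā)⌋`. -/
def A5 (a : Alph m n → ℝ) (b : Fin m → ℝ) (p : Alph m n → ℝ) (r : ℝ) : ℤ :=
  ⌊Real.log (qLo p ^ 2 * etaLo a b p r) / (r * Real.log (aHi a))⌋

/-- `T_{1,r} := ⌊(A_1 + A_{5,r} + 3)/A_4⌋`. -/
def T1 (a : Alph m n → ℝ) (b : Fin m → ℝ) (p : Alph m n → ℝ) (r : ℝ) : ℤ :=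
  ⌊((A1 a b + A5 a b p r + 3 : ℤ) : ℝ) / A4 a b⌋

/-- `ρ = σ^♭`:  for `σ ∈ Ψ_1`, `σ^♭ = θ`; for `σ ∈ Ψ_l` with `l ≥ 2`, `σ^♭` is the unique
`ρ ∈ Ψ_{l-1}` with `ρ_L = (σ_L)^-` and `ρ_y` an initial segment of `σ_y`. -/
def IsFlat (a : Alph m n → ℝ) (b : Fin m → ℝ) (σ ρ : Wd m n) : Prop :=
  (σ.1.length = 1 ∧ ρ = (([], []) : Wd m n)) ∨
  (2 ≤ σ.1.length ∧ ρ ∈ Psi a b (σ.1.length - 1) ∧ ρ.1 = σ.1.dropLast ∧ sy ρ <+: sy σ)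

/-- `Λ_{n,r} := {σ ∈ Ψ^* : E_r(σ^♭) ≥ η̲_r^n > E_r(σ)}`. -/
def Lam (a : Alph m n → ℝ) (b : Fin m → ℝ) (p : Alph m n → ℝ) (r : ℝ) (N : ℕ) :
    Set (Wd m n) :=
  {σ | σ ∈ PsiStar a b ∧ ∃ ρ : Wd m n, IsFlat a b σ ρ ∧
    etaLo a b p r ^ N ≤ Er a p r ρ ∧ Er a p r σ < etaLo a b p r ^ N}

/-- `S_{n,r} := {σ ∈ Ψ^* : η̲_r^{n+1} ≤ E_r(σ) < η̲_r^n}`. -/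
def Snr (a : Alph m n → ℝ) (b : Fin m → ℝ) (p : Alph m n → ℝ) (r : ℝ) (N : ℕ) :
    Set (Wd m n) :=
  {σ | σ ∈ PsiStar a b ∧ etaLo a b p r ^ (N + 1) ≤ Er a p r σ ∧
    Er a p r σ < etaLo a b p r ^ N}

/-- `G_1(σ) := {ω ∈ S_{n,r} : σ_L ⪯ ω_L and σ_y ⪯ ω_y}`. -/
def G1 (a : Alph m n → ℝ) (b : Fin m → ℝ) (p : Alph m n → ℝ) (r : ℝ) (N : ℕ)
    (σ : Wd m n) : Set (Wd m n) :=
  {ω | ω ∈ Snr a b p r N ∧ σ.1 <+: ω.1 ∧ sy σ <+: sy ω}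

/-- `Λ_h(σ) := {ρ ∈ Φ_{l+h} : σ ⪯ ρ}` (componentwise order on pairs). -/
def LamH (a : Alph m n → ℝ) (b : Fin m → ℝ) (σ : Wd m n) (h : ℕ) : Set (Wd m n) :=
  {ρ | ρ ∈ Psi a b (σ.1.length + h) ∧ σ.1 <+: ρ.1 ∧ σ.2 <+: ρ.2}

/-- `I_{k,r}(t) := Σ_{ω∈Φ_k} E_r(ω)^t`. -/
def Ih (a : Alph m n → ℝ) (b : Fin m → ℝ) (p : Alph m n → ℝ) (r : ℝ) (k : ℕ) (t : ℝ) : ℝ :=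
  ∑' ω : Psi a b k, Er a p r ω.1 ^ t

/-- `Υ_n(t,s) := Σ_{σ∈Ψ_n} (p_{σ_L} q_{σ_R})^t a_{σ_L}^s`. -/
def Ups (a : Alph m n → ℝ) (b : Fin m → ℝ) (p : Alph m n → ℝ) (N : ℕ) (t s : ℝ) : ℝ :=
  ∑' σ : Psi a b N, (pP p σ.1.1 * qP p σ.1.2) ^ t * aP a σ.1.1 ^ s

/-- `τ_0 := ((1,j_0),(n_{j_0},j_0))`. -/
def tau0 (j0 : Fin m) (h : 2 ≤ n j0) : List (Alph m n) :=
  [⟨j0, ⟨0, by omega⟩⟩, ⟨j0, ⟨n j0 - 1, by omega⟩⟩]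

/-- `σ̄` is a bar-extension of `σ ∈ Ψ_l`: `σ̄ ∈ Ψ_{l+2}`, `σ̄_L = σ_L ∗ τ_0`, `σ_R ⪯ σ̄_R`. -/
def BarExt (a : Alph m n → ℝ) (b : Fin m → ℝ) (j0 : Fin m) (h : 2 ≤ n j0)
    (σ σb : Wd m n) : Prop :=
  σb ∈ Psi a b (σ.1.length + 2) ∧ σb.1 = σ.1 ++ tau0 j0 h ∧ σ.2 <+: σb.2

/-- cylinder set `[σ] ⊆ Φ_∞ = G^ℕ × G_y^ℕ`. -/
def Cyl (σ : Wd m n) : Set ((ℕ → Alph m n) × (ℕ → Fin m)) :=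
  {x | (∀ i : ℕ, ∀ hi : i < σ.1.length, x.1 i = σ.1.get ⟨i, hi⟩) ∧
       (∀ i : ℕ, ∀ hi : i < σ.2.length, x.2 i = σ.2.get ⟨i, hi⟩)}

/-- the affine map `f_{ij}(x,y) = (a_{ij} x + c_{ij}, b_j y + d_j)`. -/
def fmap (a : Alph m n → ℝ) (b : Fin m → ℝ) (c : Alph m n → ℝ) (d : Fin m → ℝ)
    (g : Alph m n) : ℝ × ℝ → ℝ × ℝ :=
  fun x => (a g * x.1 + c g, b g.1 * x.2 + d g.1)

/-- `A_{L,σ} = c_{i_1j_1} + Σ_{p≥2} (∏_{h<p} a_{i_hj_h}) c_{i_pj_p}`. -/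
def xL (a c : Alph m n → ℝ) : List (Alph m n) → ℝ
  | [] => 0
  | g :: w => c g + a g * xL a c w

/-- `B_{L,σ} = d_{j_1} + Σ_{p≥2} (∏_{h<p} b_{j_h}) d_{j_p}`. -/
def yL (b d : Fin m → ℝ) : List (Fin m) → ℝ
  | [] => 0
  | j :: τ => d j + b j * yL b d τ

/-- the approximate square `F_σ = [A_{L,σ}, A_{L,σ}+a_{σ_L}] × [B_{L,σ}, B_{L,σ}+b_{σ_y}]`. -/
def Fsq (a c : Alph m n → ℝ) (b d : Fin m → ℝ) (σ : Wd m n) : Set (ℝ × ℝ) :=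
  Set.Icc (xL a c σ.1) (xL a c σ.1 + aP a σ.1) ×ˢ
    Set.Icc (yL b d (sy σ)) (yL b d (sy σ) + bP b (sy σ))

/-- the Euclidean distance on `ℝ²`. -/
def eudist (x y : ℝ × ℝ) : ℝ := Real.sqrt ((x.1 - y.1) ^ 2 + (x.2 - y.2) ^ 2)

/-- the horizontal distance `d_h(S,T) = inf{|x-x'| : (x,y)∈S, (x',y')∈T}`. -/
def dH (S T : Set (ℝ × ℝ)) : ℝ := sInf {e | ∃ x ∈ S, ∃ y ∈ T, e = |x.1 - y.1|}

/-- the (Euclidean) diameter of a subset of `ℝ²`. -/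
def euDiam (S : Set (ℝ × ℝ)) : ℝ := sSup {e | ∃ x ∈ S, ∃ y ∈ S, e = eudist x y}

/-- the `N`-th quantization error of order `r`. -/
def qerr (μ : Measure (ℝ × ℝ)) (r : ℝ) (N : ℕ) : ℝ :=
  sInf {e : ℝ | ∃ α : Finset (ℝ × ℝ), ∃ hα : α.Nonempty, α.card ≤ N ∧
    e = (∫ x, α.inf' hα (fun y => eudist x y ^ r) ∂μ) ^ (1 / r)}

/-- the topological support of a measure on `ℝ²`. -/
def suppSet (μ : Measure (ℝ × ℝ)) : Set (ℝ × ℝ) :=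
  {x | ∀ U : Set (ℝ × ℝ), IsOpen U → x ∈ U → μ U ≠ 0}

/-- the dyadic square `[k 2^{-N}, (k+1) 2^{-N}) × [k' 2^{-N}, (k'+1) 2^{-N})`. -/
def Dy (N : ℕ) (k : ℤ × ℤ) : Set (ℝ × ℝ) :=
  Set.Ico ((k.1 : ℝ) * (2 : ℝ) ^ (-(N : ℤ))) (((k.1 : ℝ) + 1) * (2 : ℝ) ^ (-(N : ℤ))) ×ˢ
    Set.Ico ((k.2 : ℝ) * (2 : ℝ) ^ (-(N : ℤ))) (((k.2 : ℝ) + 1) * (2 : ℝ) ^ (-(N : ℤ)))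


----------------------------------------------------------------
-- generic list product lemmas
private lemma listProd_pos {α : Type*} {f : α → ℝ} (hf : ∀ x, 0 < f x) (l : List α) :
    0 < (l.map f).prod := by
  induction l with
  | nil => simp
  | cons x l ih => simp only [List.map_cons, List.prod_cons]; exact mul_pos (hf x) ih

private lemma listProd_le_one {α : Type*} {f : α → ℝ} (hf0 : ∀ x, 0 < f x)
    (hf : ∀ x, f x ≤ 1) (l : List α) : (l.map f).prod ≤ 1 := by
  induction l with
  | nil => simp
  | cons x l ih =>
    simp only [List.map_cons, List.prod_cons]
    calc f x * (l.map f).prod ≤ 1 * 1 :=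
      mul_le_mul (hf x) ih (listProd_pos hf0 l).le zero_le_one
    _ = 1 := by ring

private lemma listProd_le_pow {α : Type*} {f : α → ℝ} {B : ℝ} (hf0 : ∀ x, 0 < f x)
    (hf : ∀ x, f x ≤ B) (l : List α) : (l.map f).prod ≤ B ^ l.length := by
  induction l with
  | nil => simp
  | cons x l ih =>
    have hB : 0 ≤ B := le_trans (hf0 x).le (hf x)
    simp only [List.map_cons, List.prod_cons, List.length_cons, pow_succ]
    calc f x * (l.map f).prod ≤ B * B ^ l.length :=
      mul_le_mul (hf x) ih (listProd_pos hf0 l).le hB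
    _ = B ^ l.length * B := by ring

private lemma pow_le_listProd {α : Type*} {f : α → ℝ} {A : ℝ} (hA : 0 ≤ A)
    (hf : ∀ x, A ≤ f x) (l : List α) : A ^ l.length ≤ (l.map f).prod := by
  induction l with
  | nil => simp
  | cons x l ih =>
    simp only [List.map_cons, List.prod_cons, List.length_cons, pow_succ]
    calc A ^ l.length * A = A * A ^ l.length := by ring
    _ ≤ f x * (l.map f).prod := mul_le_mul (hf x) ih (pow_nonneg hA _) (le_trans hA (hf x))

----------------------------------------------------------------
-- the cut sets
def cutSet (b : Fin m → ℝ) (x : ℝ) : Set (List (Fin m)) :=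
  {τ | 1 ≤ τ.length ∧ bP b τ < x ∧ x ≤ bP b τ.dropLast}

section cut
variable {b : Fin m → ℝ} {B : ℝ}

private lemma cutSet_length_le (hb0 : ∀ j, 0 < b j) (hB0 : 0 ≤ B) (hB1 : B ≤ 1)
    (hbB : ∀ j, b j ≤ B) {x : ℝ} {N : ℕ} (hN : B ^ N < x) :
    ∀ τ ∈ cutSet b x, τ.length ≤ N := by
  intro τ hτ
  by_contra hlen
  push_neg at hlen
  have h1 : x ≤ B ^ τ.dropLast.length := le_trans hτ.2.2 (listProd_le_pow hb0 hbB _)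
  have h2 : τ.dropLast.length = τ.length - 1 := by
    simp [List.dropLast_eq_take, List.length_take]
  have h3 : N ≤ τ.length - 1 := by omega
  have h4 : B ^ (τ.length - 1) ≤ B ^ N := pow_le_pow_of_le_one hB0 hB1 h3
  rw [h2] at h1
  linarith

private lemma cutSet_finite (hm : 0 < m) (hb : ∀ j, 0 < b j ∧ b j < 1) (x : ℝ) :
    (cutSet b x).Finite := by
  rcases le_or_gt x 0 with hx | hx
  · have : cutSet b x = ∅ := by
      ext τ
      simp only [cutSet, Set.mem_setOf_eq, Set.mem_empty_iff_false, iff_false, not_and]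
      intro _ h h'
      exact absurd h (not_lt.2 (le_trans hx (listProd_pos (fun j => (hb j).1) τ).le))
    simp [this]
  · have hne : (Finset.univ : Finset (Fin m)).Nonempty := ⟨⟨0, hm⟩, Finset.mem_univ _⟩
    set B := Finset.univ.sup' hne b with hBdef
    have hbB : ∀ j, b j ≤ B := fun j => Finset.le_sup' b (Finset.mem_univ j)
    have hB0 : 0 ≤ B := le_trans (hb ⟨0, hm⟩).1.le (hbB _)
    have hB1 : B < 1 := by
      rw [hBdef, Finset.sup'_lt_iff]
      exact fun j _ => (hb j).2
    obtain ⟨N, hN⟩ := exists_pow_lt_of_lt_one hx hB1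
    exact (List.finite_length_le (Fin m) N).subset
      (fun τ hτ => cutSet_length_le (fun j => (hb j).1) hB0 hB1.le hbB hN τ hτ)

private lemma cutSet_nonempty (hm : 0 < m) (hb : ∀ j, 0 < b j ∧ b j < 1)
    {x : ℝ} (hx0 : 0 < x) (hx1 : x ≤ 1) : (cutSet b x).Nonempty := by
  set j0 : Fin m := ⟨0, hm⟩
  obtain ⟨N, hN⟩ := exists_pow_lt_of_lt_one hx0 (hb j0).2
  have hP : ∃ k, b j0 ^ k < x := ⟨N, hN⟩
  classical
  set k0 := Nat.find hP with hk0
  have hk0P : b j0 ^ k0 < x := Nat.find_spec hP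
  have hk0ne : k0 ≠ 0 := by
    intro h
    rw [h, pow_zero] at hk0P
    linarith
  refine ⟨List.replicate k0 j0, ?_, ?_, ?_⟩
  · simp [List.length_replicate]; omega
  · simpa [bP, List.map_replicate, List.prod_replicate] using hk0P
  · have hmin : ¬ (b j0 ^ (k0 - 1) < x) := Nat.find_min hP (by omega)
    push_neg at hmin
    simpa [bP, List.dropLast_replicate, List.map_replicate, List.prod_replicate] using hmin

private lemma mem_cutSet_cons_iff (hb : ∀ j, 0 < b j ∧ b j < 1)
    {x : ℝ} (hx0 : 0 < x) (hxb : ∀ j, x ≤ b j) (τ : List (Fin m)) :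
    τ ∈ cutSet b x ↔ ∃ j ρ, τ = j :: ρ ∧ ρ ∈ cutSet b (x / b j) := by
  constructor
  · rintro ⟨hlen, hlt, hle⟩
    obtain ⟨j, ρ, rfl⟩ : ∃ j ρ, τ = j :: ρ := by
      cases τ with
      | nil => simp at hlen
      | cons j ρ => exact ⟨j, ρ, rfl⟩
    have hρne : ρ ≠ [] := by
      rintro rfl
      have : bP b [j] = b j := by simp [bP]
      rw [this] at hlt
      exact absurd hlt (not_lt.2 (hxb j))
    refine ⟨j, ρ, rfl, ?_, ?_, ?_⟩
    · have := List.length_pos_iff.2 hρne; omega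
    · rw [lt_div_iff₀ (hb j).1, mul_comm]
      simpa [bP] using hlt
    · rw [div_le_iff₀ (hb j).1, mul_comm]
      have hdl : (j :: ρ).dropLast = j :: ρ.dropLast := List.dropLast_cons_of_ne_nil hρne
      rw [hdl] at hle
      simpa [bP] using hle
  · rintro ⟨j, ρ, rfl, hlen, hlt, hle⟩
    have hρne : ρ ≠ [] := by
      intro h; rw [h] at hlen; simp at hlen
    refine ⟨by simp, ?_, ?_⟩
    · have : bP b ρ * b j < x := by
        rw [← lt_div_iff₀ (hb j).1] at *
        exact hlt
      simpa [bP, mul_comm] using this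
    · have : x ≤ b j * bP b ρ.dropLast := by
        rw [← div_le_iff₀' (hb j).1]
        exact hle
      rw [List.dropLast_cons_of_ne_nil hρne]
      simpa [bP] using this

end cut

section qt
variable {b : Fin m → ℝ} {p : Alph m n → ℝ} {t : ℝ}

/-- `Qt` : the cut sum `Σ_{τ ∈ Cut(x)} q_τ^t`. -/
private noncomputable def Qt (b : Fin m → ℝ) (p : Alph m n → ℝ) (t : ℝ)
    (hm : 0 < m) (hb : ∀ j, 0 < b j ∧ b j < 1) (x : ℝ) : ℝ :=
  ∑ τ ∈ (cutSet_finite hm hb x).toFinset, (qP p τ) ^ t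

private lemma qP_cons (j : Fin m) (ρ : List (Fin m)) :
    qP p (j :: ρ) = qf p j * qP p ρ := by simp [qP]

private lemma Qt_recursion (hm : 0 < m) (hb : ∀ j, 0 < b j ∧ b j < 1)
    (hq0 : ∀ j, 0 < qf p j) (ht : 0 ≤ t)
    {x : ℝ} (hx0 : 0 < x) (hxb : ∀ j, x ≤ b j) :
    Qt b p t hm hb x = ∑ j : Fin m, (qf p j) ^ t * Qt b p t hm hb (x / b j) := by
  classical
  have hcut : (cutSet_finite hm hb x).toFinset =
      Finset.univ.biUnion (fun j : Fin m =>
        ((cutSet_finite hm hb (x / b j)).toFinset).map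
          ⟨fun ρ => j :: ρ, fun ρ1 ρ2 h => by simpa using h⟩) := by
    ext τ
    simp only [Set.Finite.mem_toFinset, Finset.mem_biUnion, Finset.mem_map,
      Function.Embedding.coeFn_mk, Finset.mem_univ, true_and]
    rw [mem_cutSet_cons_iff hb hx0 hxb]
    constructor
    · rintro ⟨j, ρ, rfl, hρ⟩
      exact ⟨j, ρ, hρ, rfl⟩
    · rintro ⟨j, ρ, hρ, rfl⟩
      exact ⟨j, ρ, rfl, hρ⟩
  rw [Qt, hcut, Finset.sum_biUnion]
  · refine Finset.sum_congr rfl (fun j _ => ?_)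
    rw [Finset.sum_map, Qt, Finset.mul_sum]
    refine Finset.sum_congr rfl (fun ρ hρ => ?_)
    have hρ' := (Set.Finite.mem_toFinset _).1 hρ
    have hq : 0 ≤ qf p j := (hq0 j).le
    have hqP : 0 ≤ qP p ρ := (listProd_pos hq0 ρ).le
    change qP p (j :: ρ) ^ t = _
    rw [qP_cons, Real.mul_rpow hq hqP]
  · intro j1 _ j2 _ hj
    simp only [Finset.disjoint_left]
    intro τ h1 h2
    simp only [Finset.mem_map, Function.Embedding.coeFn_mk] at h1 h2
    obtain ⟨ρ1, _, rfl⟩ := h1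
    obtain ⟨ρ2, _, h⟩ := h2
    exact hj (by injection h.symm)

private lemma rpow_bounds {A x : ℝ} (hA : 0 < A) (hax : A ≤ x) (hx1 : x ≤ 1) (v : ℝ) :
    min (A ^ v) 1 ≤ x ^ v ∧ x ^ v ≤ max (A ^ v) 1 := by
  have hx0 : 0 < x := lt_of_lt_of_le hA hax
  rcases le_or_gt 0 v with hv | hv
  · exact ⟨le_trans (min_le_left _ _) (Real.rpow_le_rpow hA.le hax hv),
      le_trans (Real.rpow_le_one hx0.le hx1 hv) (le_max_right _ _)⟩
  · exact ⟨le_trans (min_le_right _ _)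
        (Real.one_le_rpow_of_pos_of_le_one_of_nonpos hx0 hx1 hv.le),
      le_trans (Real.rpow_le_rpow_of_nonpos hA hax hv.le) (le_max_left _ _)⟩

private lemma div_rpow_neg {x c : ℝ} (hx : 0 < x) (hc : 0 < c) (u : ℝ) :
    (x / c) ^ (-u) = x ^ (-u) * c ^ u := by
  rw [Real.div_rpow hx.le hc.le, Real.rpow_neg hc.le, division_def, inv_inv]

private lemma exists_u (hm2 : 2 ≤ m) (hb : ∀ j, 0 < b j ∧ b j < 1)
    (hq0 : ∀ j, 0 < qf p j) (hq1 : ∀ j, qf p j ≤ 1) (ht : 0 ≤ t) :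
    ∃ u : ℝ, ∑ j : Fin m, (qf p j) ^ t * (b j) ^ u = 1 := by
  have hm : 0 < m := by omega
  have hne : (Finset.univ : Finset (Fin m)).Nonempty := ⟨⟨0, hm⟩, Finset.mem_univ _⟩
  set F : ℝ → ℝ := fun u => ∑ j : Fin m, (qf p j) ^ t * (b j) ^ u with hF
  have hcont : Continuous F := by
    refine continuous_finset_sum _ (fun j _ => Continuous.mul continuous_const ?_)
    have hc : Continuous fun u : ℝ => Real.exp (Real.log (b j) * u) :=
      Real.continuous_exp.comp (continuous_const.mul continuous_id)
    exact hc.congr (fun u => (Real.rpow_def_of_pos (hb j).1 u).symm)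
  set B := Finset.univ.sup' hne b with hBdef
  have hbB : ∀ j, b j ≤ B := fun j => Finset.le_sup' b (Finset.mem_univ j)
  have hB0 : 0 < B := lt_of_lt_of_le (hb ⟨0, hm⟩).1 (hbB _)
  have hB1 : B < 1 := by rw [hBdef, Finset.sup'_lt_iff]; exact fun j _ => (hb j).2
  set bmin := Finset.univ.inf' hne b with hbmindef
  have hbminle : ∀ j, bmin ≤ b j := fun j => Finset.inf'_le b (Finset.mem_univ j)
  have hbmin0 : 0 < bmin := by rw [hbmindef, Finset.lt_inf'_iff]; exact fun j _ => (hb j).1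
  have hbmin1 : bmin < 1 := lt_of_le_of_lt (hbminle ⟨0, hm⟩) (hb _).2
  set qmin := Finset.univ.inf' hne (qf p) with hqmindef
  have hqminle : ∀ j, qmin ≤ qf p j := fun j => Finset.inf'_le (qf p) (Finset.mem_univ j)
  have hqmin0 : 0 < qmin := by rw [hqmindef, Finset.lt_inf'_iff]; exact fun j _ => hq0 j
  have hqmin1 : qmin ≤ 1 := le_trans (hqminle ⟨0, hm⟩) (hq1 _)
  -- lower point
  set u1 : ℝ := -(t * Real.log qmin) / Real.log bmin with hu1def
  have hlogbmin : Real.log bmin < 0 := Real.log_neg hbmin0 hbmin1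
  have hFu1 : 1 ≤ F u1 := by
    obtain ⟨jm, _, hjm⟩ := Finset.exists_mem_eq_inf' hne b
    have hbjm : b jm = bmin := hjm.symm
    have hterm : (1 : ℝ) ≤ (qf p jm) ^ t * (b jm) ^ u1 := by
      have h1 : (b jm) ^ u1 = qmin ^ (-t) := by
        rw [hbjm, Real.rpow_def_of_pos hbmin0, Real.rpow_def_of_pos hqmin0]
        congr 1
        rw [hu1def, mul_comm (Real.log bmin), div_mul_cancel₀ _ (ne_of_lt hlogbmin)]
        ring
      rw [h1]
      have h2 : qmin ^ t * qmin ^ (-t) = 1 := by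
        rw [← Real.rpow_add hqmin0]; simp
      calc (1 : ℝ) = qmin ^ t * qmin ^ (-t) := h2.symm
      _ ≤ (qf p jm) ^ t * qmin ^ (-t) := by
          have := Real.rpow_le_rpow hqmin0.le (hqminle jm) ht
          exact mul_le_mul_of_nonneg_right this (Real.rpow_nonneg hqmin0.le _)
    calc (1 : ℝ) ≤ (qf p jm) ^ t * (b jm) ^ u1 := hterm
    _ ≤ F u1 := Finset.single_le_sum
        (fun j _ => mul_nonneg (Real.rpow_nonneg (hq0 j).le _) (Real.rpow_nonneg (hb j).1.le _))
        (Finset.mem_univ jm)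
  -- upper point
  set u2 : ℝ := -(Real.log m) / Real.log B with hu2def
  have hlogB : Real.log B < 0 := Real.log_neg hB0 hB1
  have hu2nn : 0 ≤ u2 := by
    rw [hu2def, neg_div]
    have hlm : 0 ≤ Real.log m :=
      Real.log_nonneg (by exact_mod_cast Nat.one_le_iff_ne_zero.2 (by omega))
    have : Real.log (m : ℝ) / Real.log B ≤ 0 := div_nonpos_of_nonneg_of_nonpos hlm hlogB.le
    linarith
  have hFu2 : F u2 ≤ 1 := by
    have hBu2 : B ^ u2 = (m : ℝ)⁻¹ := by
      rw [Real.rpow_def_of_pos hB0]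
      have : Real.log B * u2 = -(Real.log m) := by
        rw [hu2def, mul_comm, div_mul_cancel₀ _ (ne_of_lt hlogB)]
      rw [this, Real.exp_neg, Real.exp_log (by positivity : (0:ℝ) < (m:ℝ))]
    have hsum : F u2 ≤ ∑ _j : Fin m, (m : ℝ)⁻¹ := by
      refine Finset.sum_le_sum (fun j _ => ?_)
      rw [← hBu2]
      have h1 : (qf p j) ^ t ≤ 1 := Real.rpow_le_one (hq0 j).le (hq1 j) ht
      have h2 : (b j) ^ u2 ≤ B ^ u2 := Real.rpow_le_rpow (hb j).1.le (hbB j) hu2nn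
      calc (qf p j) ^ t * (b j) ^ u2 ≤ 1 * (B ^ u2) :=
        mul_le_mul h1 h2 (Real.rpow_nonneg (hb j).1.le _) zero_le_one
      _ = B ^ u2 := one_mul _
    have : ∑ _j : Fin m, (m : ℝ)⁻¹ = 1 := by
      rw [Finset.sum_const, Finset.card_univ, Fintype.card_fin, nsmul_eq_mul]
      field_simp
    linarith
  have h1mem : (1 : ℝ) ∈ Set.uIcc (F u2) (F u1) := Set.mem_uIcc.2 (Or.inl ⟨hFu2, hFu1⟩)
  obtain ⟨u, _, hu⟩ := intermediate_value_uIcc hcont.continuousOn h1mem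
  exact ⟨u, hu⟩

private lemma Qt_bounds (hm : 0 < m) (hb : ∀ j, 0 < b j ∧ b j < 1)
    (hq0 : ∀ j, 0 < qf p j) (hq1 : ∀ j, qf p j ≤ 1) (ht : 0 ≤ t)
    {u : ℝ} (hu : ∑ j : Fin m, (qf p j) ^ t * (b j) ^ u = 1) :
    ∃ c C : ℝ, 0 < c ∧ 0 < C ∧ ∀ x : ℝ, 0 < x → x ≤ 1 →
      c * x ^ (-u) ≤ Qt b p t hm hb x ∧ Qt b p t hm hb x ≤ C * x ^ (-u) := by
  classical
  have hne : (Finset.univ : Finset (Fin m)).Nonempty := ⟨⟨0, hm⟩, Finset.mem_univ _⟩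
  set B := Finset.univ.sup' hne b with hBdef
  have hbB : ∀ j, b j ≤ B := fun j => Finset.le_sup' b (Finset.mem_univ j)
  have hB0 : 0 < B := lt_of_lt_of_le (hb ⟨0, hm⟩).1 (hbB _)
  have hB1 : B < 1 := by rw [hBdef, Finset.sup'_lt_iff]; exact fun j _ => (hb j).2
  set bmin := Finset.univ.inf' hne b with hbmindef
  have hbminle : ∀ j, bmin ≤ b j := fun j => Finset.inf'_le b (Finset.mem_univ j)
  have hbmin0 : 0 < bmin := by rw [hbmindef, Finset.lt_inf'_iff]; exact fun j _ => (hb j).1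
  have hbmin1 : bmin < 1 := lt_of_le_of_lt (hbminle ⟨0, hm⟩) (hb _).2
  set qmin := Finset.univ.inf' hne (qf p) with hqmindef
  have hqminle : ∀ j, qmin ≤ qf p j := fun j => Finset.inf'_le (qf p) (Finset.mem_univ j)
  have hqmin0 : 0 < qmin := by rw [hqmindef, Finset.lt_inf'_iff]; exact fun j _ => hq0 j
  have hqmin1 : qmin ≤ 1 := le_trans (hqminle ⟨0, hm⟩) (hq1 _)
  obtain ⟨L0, hL0⟩ := exists_pow_lt_of_lt_one hbmin0 hB1
  set K : ℝ := ((List.finite_length_le (Fin m) L0).toFinset.card : ℝ) with hKdef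
  have hK1 : (1 : ℝ) ≤ K := by
    rw [hKdef]
    have : ([] : List (Fin m)) ∈ (List.finite_length_le (Fin m) L0).toFinset := by
      rw [Set.Finite.mem_toFinset]; simp
    exact_mod_cast Finset.card_pos.2 ⟨_, this⟩
  set m1 : ℝ := (qmin ^ L0) ^ t with hm1def
  have hm10 : 0 < m1 := Real.rpow_pos_of_pos (pow_pos hqmin0 _) _
  set c1 : ℝ := min (bmin ^ (-u)) 1 with hc1def
  set c2 : ℝ := max (bmin ^ (-u)) 1 with hc2def
  have hc10 : 0 < c1 := lt_min (Real.rpow_pos_of_pos hbmin0 _) one_pos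
  have hc20 : 0 < c2 := lt_of_lt_of_le one_pos (le_max_right _ _)
  -- base region bounds
  have hbase : ∀ x : ℝ, bmin < x → x ≤ 1 →
      m1 ≤ Qt b p t hm hb x ∧ Qt b p t hm hb x ≤ K := by
    intro x hbx hx1
    have hx0 : 0 < x := lt_trans hbmin0 hbx
    have hlen : ∀ τ ∈ cutSet b x, τ.length ≤ L0 :=
      cutSet_length_le (fun j => (hb j).1) hB0.le hB1.le hbB (lt_trans hL0 hbx)
    constructor
    · obtain ⟨τ0, hτ0⟩ := cutSet_nonempty hm hb hx0 hx1
      have hτ0mem : τ0 ∈ (cutSet_finite hm hb x).toFinset := (Set.Finite.mem_toFinset _).2 hτ0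
      have hqPτ : qmin ^ L0 ≤ qP p τ0 := by
        calc qmin ^ L0 ≤ qmin ^ τ0.length :=
          pow_le_pow_of_le_one hqmin0.le hqmin1 (hlen τ0 hτ0)
        _ ≤ qP p τ0 := pow_le_listProd hqmin0.le hqminle τ0
      calc m1 ≤ (qP p τ0) ^ t := Real.rpow_le_rpow (pow_pos hqmin0 _).le hqPτ ht
      _ ≤ Qt b p t hm hb x := Finset.single_le_sum
          (fun τ _ => Real.rpow_nonneg (listProd_pos hq0 τ).le _) hτ0mem
    · calc Qt b p t hm hb x ≤ ∑ τ ∈ (cutSet_finite hm hb x).toFinset, (1 : ℝ) :=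
        Finset.sum_le_sum (fun τ _ =>
          Real.rpow_le_one (listProd_pos hq0 τ).le (listProd_le_one hq0 hq1 τ) ht)
      _ = ((cutSet_finite hm hb x).toFinset.card : ℝ) := by
          rw [Finset.sum_const, nsmul_eq_mul, mul_one]
      _ ≤ K := by
          rw [hKdef]
          have hsub : (cutSet_finite hm hb x).toFinset ⊆
              (List.finite_length_le (Fin m) L0).toFinset := by
            intro τ hτ
            rw [Set.Finite.mem_toFinset] at *
            exact hlen τ hτ
          exact_mod_cast Finset.card_le_card hsub
  set cc : ℝ := m1 / c2 with hccdef
  set CC : ℝ := K / c1 with hCCdef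
  have hcc0 : 0 < cc := div_pos hm10 hc20
  have hCC0 : 0 < CC := div_pos (lt_of_lt_of_le one_pos hK1) hc10
  have main : ∀ N : ℕ, ∀ x : ℝ, 0 < x → x ≤ 1 → B ^ N < x →
      cc * x ^ (-u) ≤ Qt b p t hm hb x ∧ Qt b p t hm hb x ≤ CC * x ^ (-u) := by
    intro N
    induction N with
    | zero => intro x hx0 hx1 hBx; rw [pow_zero] at hBx; linarith
    | succ N ihN =>
      intro x hx0 hx1 hBx
      rcases lt_or_ge bmin x with hbx | hxb
      · obtain ⟨hQl, hQu⟩ := hbase x hbx hx1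
        obtain ⟨hxv1, hxv2⟩ := rpow_bounds hbmin0 hbx.le hx1 (-u)
        constructor
        · calc cc * x ^ (-u) ≤ cc * c2 := mul_le_mul_of_nonneg_left hxv2 hcc0.le
            _ = m1 := by rw [hccdef, div_mul_cancel₀ _ (ne_of_gt hc20)]
            _ ≤ Qt b p t hm hb x := hQl
        · calc Qt b p t hm hb x ≤ K := hQu
            _ = CC * c1 := by rw [hCCdef, div_mul_cancel₀ _ (ne_of_gt hc10)]
            _ ≤ CC * x ^ (-u) := mul_le_mul_of_nonneg_left hxv1 hCC0.le
      · have hxbj : ∀ j, x ≤ b j := fun j => le_trans hxb (hbminle j)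
        have hrec := Qt_recursion hm hb hq0 ht hx0 hxbj
        have hIH : ∀ j : Fin m,
            cc * (x / b j) ^ (-u) ≤ Qt b p t hm hb (x / b j) ∧
            Qt b p t hm hb (x / b j) ≤ CC * (x / b j) ^ (-u) := by
          intro j
          refine ihN (x / b j) (div_pos hx0 (hb j).1) ((div_le_one (hb j).1).2 (hxbj j)) ?_
          rw [lt_div_iff₀ (hb j).1]
          calc B ^ N * b j ≤ B ^ N * B :=
                mul_le_mul_of_nonneg_left (hbB j) (pow_nonneg hB0.le _)
            _ = B ^ (N + 1) := by ring
            _ < x := hBx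
        constructor
        · calc cc * x ^ (-u)
              = ∑ j : Fin m, (qf p j) ^ t * (b j) ^ u * (cc * x ^ (-u)) := by
                rw [← Finset.sum_mul, hu, one_mul]
            _ = ∑ j : Fin m, (qf p j) ^ t * (cc * (x / b j) ^ (-u)) :=
                Finset.sum_congr rfl (fun j _ => by rw [div_rpow_neg hx0 (hb j).1]; ring)
            _ ≤ ∑ j : Fin m, (qf p j) ^ t * Qt b p t hm hb (x / b j) :=
                Finset.sum_le_sum (fun j _ =>
                  mul_le_mul_of_nonneg_left (hIH j).1 (Real.rpow_nonneg (hq0 j).le _))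
            _ = Qt b p t hm hb x := hrec.symm
        · calc Qt b p t hm hb x
              = ∑ j : Fin m, (qf p j) ^ t * Qt b p t hm hb (x / b j) := hrec
            _ ≤ ∑ j : Fin m, (qf p j) ^ t * (CC * (x / b j) ^ (-u)) :=
                Finset.sum_le_sum (fun j _ =>
                  mul_le_mul_of_nonneg_left (hIH j).2 (Real.rpow_nonneg (hq0 j).le _))
            _ = ∑ j : Fin m, (qf p j) ^ t * (b j) ^ u * (CC * x ^ (-u)) :=
                Finset.sum_congr rfl (fun j _ => by rw [div_rpow_neg hx0 (hb j).1]; ring)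
            _ = CC * x ^ (-u) := by rw [← Finset.sum_mul, hu, one_mul]
  refine ⟨cc, CC, hcc0, hCC0, fun x hx0 hx1 => ?_⟩
  obtain ⟨N, hN⟩ := exists_pow_lt_of_lt_one hx0 hB1
  exact main N x hx0 hx1 hN

end qt

----------------------------------------------------------------
-- the Psi side
section psi
variable {a : Alph m n → ℝ} {b : Fin m → ℝ} {p : Alph m n → ℝ} {r t : ℝ}

private lemma mem_psi_iff (ha : ∀ g, 0 < a g) (hb : ∀ j, 0 < b j)
    (k : ℕ) (σ : Wd m n) :
    σ ∈ Psi a b k ↔ σ.1.length = k ∧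
      σ.2 ∈ cutSet b (aP a σ.1 / bP b (σ.1.map Sigma.fst)) := by
  have hbL : 0 < bP b (σ.1.map Sigma.fst) := listProd_pos hb _
  have hsplit : bP b (sy σ) = bP b (σ.1.map Sigma.fst) * bP b σ.2 := by
    simp [sy, bP]
  constructor
  · rintro ⟨h1, h2, h3, h4⟩
    have hne : σ.2 ≠ [] := by intro h; rw [h] at h2; simp at h2
    have hdl : (sy σ).dropLast = σ.1.map Sigma.fst ++ σ.2.dropLast := by
      rw [sy, List.dropLast_append_of_ne_nil hne]
    have hdl' : bP b (sy σ).dropLast = bP b (σ.1.map Sigma.fst) * bP b σ.2.dropLast := by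
      rw [hdl]; simp [bP]
    refine ⟨h1, h2, ?_, ?_⟩
    · rw [lt_div_iff₀ hbL, mul_comm]
      rw [hsplit] at h4; exact h4
    · rw [div_le_iff₀ hbL, mul_comm]
      rw [hdl'] at h3; exact h3
  · rintro ⟨h1, h2, h3, h4⟩
    have hne : σ.2 ≠ [] := by intro h; rw [h] at h2; simp at h2
    have hdl' : bP b (sy σ).dropLast = bP b (σ.1.map Sigma.fst) * bP b σ.2.dropLast := by
      rw [sy, List.dropLast_append_of_ne_nil hne]; simp [bP]
    refine ⟨h1, h2, ?_, ?_⟩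
    · rw [hdl']
      rw [div_le_iff₀ hbL, mul_comm] at h4; exact h4
    · rw [hsplit]
      rw [lt_div_iff₀ hbL, mul_comm] at h3; exact h3

private lemma psi_finite (hm : 0 < m) (ha : ∀ g, 0 < a g)
    (hb : ∀ j, 0 < b j ∧ b j < 1) (k : ℕ) : (Psi a b k).Finite := by
  classical
  have hsub : Psi a b k ⊆
      ⋃ w ∈ {w : List (Alph m n) | w.length = k},
        ({w} ×ˢ cutSet b (aP a w / bP b (w.map Sigma.fst))) := by
    intro σ hσ
    obtain ⟨h1, h2⟩ := (mem_psi_iff ha (fun j => (hb j).1) k σ).1 hσ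
    exact Set.mem_biUnion h1 (Set.mem_prod.2 ⟨rfl, h2⟩)
  exact Set.Finite.subset
    ((List.finite_length_eq (Alph m n) k).biUnion
      (fun w _ => (Set.finite_singleton w).prod (cutSet_finite hm hb _))) hsub

private lemma tsum_finite_set {S : Set (Wd m n)} (hS : S.Finite) (f : Wd m n → ℝ) :
    ∑' x : S, f x = ∑ x ∈ hS.toFinset, f x := by
  letI := hS.fintype
  rw [tsum_fintype]
  exact (Finset.sum_subtype _ (fun x => hS.mem_toFinset) f).symm

private lemma Er_rpow (ha : ∀ g, 0 < a g) (hp : ∀ g, 0 < p g)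
    (hq0 : ∀ j, 0 < qf p j) (σ : Wd m n) :
    Er a p r σ ^ t = (pP p σ.1 * aP a σ.1 ^ r) ^ t * (qP p σ.2) ^ t := by
  have hpP : 0 < pP p σ.1 := listProd_pos hp σ.1
  have haP : 0 < aP a σ.1 := listProd_pos ha σ.1
  have hqP : 0 < qP p σ.2 := listProd_pos hq0 σ.2
  rw [Er, mul_right_comm, Real.mul_rpow
    (mul_nonneg hpP.le (Real.rpow_nonneg haP.le r)) hqP.le]

private lemma Ih_eq_sum (hm : 0 < m) (ha : ∀ g, 0 < a g)
    (hb : ∀ j, 0 < b j ∧ b j < 1) (hp : ∀ g, 0 < p g)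
    (hq0 : ∀ j, 0 < qf p j) (k : ℕ) :
    Ih a b p r k t = ∑ w ∈ (List.finite_length_eq (Alph m n) k).toFinset,
      (pP p w * aP a w ^ r) ^ t *
        Qt b p t hm hb (aP a w / bP b (w.map Sigma.fst)) := by
  classical
  have hfin := psi_finite (a := a) hm ha hb k
  rw [Ih, tsum_finite_set hfin (fun σ => Er a p r σ ^ t)]
  have hrhs : ∀ w : List (Alph m n),
      (pP p w * aP a w ^ r) ^ t * Qt b p t hm hb (aP a w / bP b (w.map Sigma.fst)) =
      ∑ τ ∈ (cutSet_finite hm hb (aP a w / bP b (w.map Sigma.fst))).toFinset,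
        (pP p w * aP a w ^ r) ^ t * (qP p τ) ^ t := by
    intro w; rw [Qt, Finset.mul_sum]
  rw [Finset.sum_congr rfl (fun w _ => hrhs w)]
  rw [Finset.sum_sigma' ((List.finite_length_eq (Alph m n) k).toFinset)
    (fun w => (cutSet_finite hm hb (aP a w / bP b (w.map Sigma.fst))).toFinset)
    (fun w τ => (pP p w * aP a w ^ r) ^ t * (qP p τ) ^ t)]
  refine Finset.sum_bij' (fun σ _ => (⟨σ.1, σ.2⟩ : Σ _ : List (Alph m n), List (Fin m)))
    (fun z _ => ((z.1, z.2) : Wd m n)) ?_ ?_ ?_ ?_ ?_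
  · intro σ hσ
    obtain ⟨h1, h2⟩ := (mem_psi_iff ha (fun j => (hb j).1) k σ).1 (hfin.mem_toFinset.1 hσ)
    rw [Finset.mem_sigma]
    exact ⟨by rw [Set.Finite.mem_toFinset]; exact h1, by rw [Set.Finite.mem_toFinset]; exact h2⟩
  · intro z hz
    rw [Finset.mem_sigma] at hz
    rw [Set.Finite.mem_toFinset]
    refine (mem_psi_iff ha (fun j => (hb j).1) k _).2 ⟨?_, ?_⟩
    · simpa using (Set.Finite.mem_toFinset _).1 hz.1
    · simpa using (Set.Finite.mem_toFinset _).1 hz.2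
  · intro σ hσ; rfl
  · intro z hz; rfl
  · intro σ hσ
    exact Er_rpow ha hp hq0 σ

private lemma sum_len_append {α : Type*} [Fintype α] (k l : ℕ) (f : List α → ℝ) :
    ∑ v ∈ (List.finite_length_eq α (k + l)).toFinset, f v =
      ∑ w ∈ (List.finite_length_eq α k).toFinset,
        ∑ w' ∈ (List.finite_length_eq α l).toFinset, f (w ++ w') := by
  classical
  rw [← Finset.sum_product']
  refine Finset.sum_bij' (fun v _ => ((v.take k, v.drop k) : List α × List α))
    (fun z _ => z.1 ++ z.2) ?_ ?_ ?_ ?_ ?_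
  · intro v hv
    rw [Set.Finite.mem_toFinset] at hv
    have hv' : v.length = k + l := hv
    rw [Finset.mem_product, Set.Finite.mem_toFinset, Set.Finite.mem_toFinset]
    constructor
    · simp only [Set.mem_setOf_eq, List.length_take, hv']; omega
    · simp only [Set.mem_setOf_eq, List.length_drop, hv']; omega
  · intro z hz
    rw [Finset.mem_product, Set.Finite.mem_toFinset, Set.Finite.mem_toFinset] at hz
    rw [Set.Finite.mem_toFinset]
    simp only [Set.mem_setOf_eq, List.length_append]
    have h1 : z.1.length = k := hz.1
    have h2 : z.2.length = l := hz.2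
    omega
  · intro v hv
    exact List.take_append_drop k v
  · intro z hz
    rw [Finset.mem_product, Set.Finite.mem_toFinset, Set.Finite.mem_toFinset] at hz
    have h1 : z.1.length = k := hz.1
    ext
    · simp [List.take_left' h1]
    · simp [List.drop_left' h1]
  · intro v hv
    rw [List.take_append_drop]

private lemma aP_le_bP {a : Alph m n → ℝ} {b : Fin m → ℝ}
    (hab : ∀ g : Alph m n, 0 < a g ∧ a g < b g.1 ∧ b g.1 < 1) :
    ∀ w : List (Alph m n), aP a w ≤ bP b (w.map Sigma.fst) := by
  intro w
  induction w with
  | nil => simp [aP, bP]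
  | cons g w ih =>
    have ha0 : 0 < aP a w := listProd_pos (fun g => (hab g).1) w
    have hb0 : 0 < b g.1 := lt_trans (hab g).1 (hab g).2.1
    have h1 : aP a (g :: w) = a g * aP a w := by simp [aP]
    have h2 : bP b ((g :: w).map Sigma.fst) = b g.1 * bP b (w.map Sigma.fst) := by simp [bP]
    rw [h1, h2]
    exact mul_le_mul (hab g).2.1.le ih ha0.le hb0.le

end psi

theorem stmt13
    (m : ℕ) (hm : 2 ≤ m) (n : Fin m → ℕ) (hn : ∀ j, 1 ≤ n j)
    (a : Alph m n → ℝ) (b : Fin m → ℝ)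
    (hab : ∀ g : Alph m n, 0 < a g ∧ a g < b g.1 ∧ b g.1 < 1)
    (p : Alph m n → ℝ) (hp : ∀ g, 0 < p g) (hp1 : ∑ g : Alph m n, p g = 1)
    (r : ℝ) (hr : 0 < r)
    (t : ℝ) (ht : 0 ≤ t) :
    ∃ h1 h2 : ℝ, 0 < h1 ∧ 0 < h2 ∧ ∀ k l : ℕ, 1 ≤ k → 1 ≤ l →
      h2 * Ih a b p r k t * Ih a b p r l t ≤ Ih a b p r (k + l) t ∧
      Ih a b p r (k + l) t ≤ h1 * Ih a b p r k t * Ih a b p r l t := by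
  classical
  have hm0 : 0 < m := by omega
  have ha : ∀ g, 0 < a g := fun g => (hab g).1
  have hb : ∀ j : Fin m, 0 < b j ∧ b j < 1 := fun j =>
    ⟨lt_trans (hab ⟨j, ⟨0, hn j⟩⟩).1 (hab ⟨j, ⟨0, hn j⟩⟩).2.1, (hab ⟨j, ⟨0, hn j⟩⟩).2.2⟩
  have hq0 : ∀ j, 0 < qf p j := fun j =>
    Finset.sum_pos (fun i _ => hp _) ⟨⟨0, hn j⟩, Finset.mem_univ _⟩
  have hqsum : ∑ j : Fin m, qf p j = 1 := by
    have h : (∑ j : Fin m, ∑ i : Fin (n j), p ⟨j, i⟩) =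
        ∑ x ∈ (Finset.univ.sigma fun j : Fin m => (Finset.univ : Finset (Fin (n j)))),
          p ⟨x.1, x.2⟩ :=
      Finset.sum_sigma' _ _ _
    calc ∑ j : Fin m, qf p j
        = ∑ x ∈ (Finset.univ.sigma fun j : Fin m => (Finset.univ : Finset (Fin (n j)))),
            p ⟨x.1, x.2⟩ := h
      _ = ∑ g : Alph m n, p g := by
          rw [Finset.univ_sigma_univ]
      _ = 1 := hp1
  have hq1 : ∀ j, qf p j ≤ 1 := fun j => by
    rw [← hqsum]
    exact Finset.single_le_sum (fun j' _ => (hq0 j').le) (Finset.mem_univ j)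
  obtain ⟨u, hu⟩ := exists_u hm hb hq0 hq1 ht
  obtain ⟨c, C, hc, hC, hQ⟩ := Qt_bounds hm0 hb hq0 hq1 ht hu
  have hbpos : ∀ j, (0:ℝ) < b j := fun j => (hb j).1
  have hIh : ∀ k, Ih a b p r k t =
      ∑ w ∈ (List.finite_length_eq (Alph m n) k).toFinset,
        (pP p w * aP a w ^ r) ^ t *
          Qt b p t hm0 hb (aP a w / bP b (w.map Sigma.fst)) :=
    fun k => Ih_eq_sum hm0 ha hb hp hq0 k
  have hxv0 : ∀ w : List (Alph m n), 0 < aP a w / bP b (w.map Sigma.fst) :=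
    fun w => div_pos (listProd_pos ha w) (listProd_pos hbpos _)
  have hxv1 : ∀ w : List (Alph m n), aP a w / bP b (w.map Sigma.fst) ≤ 1 :=
    fun w => (div_le_one (listProd_pos hbpos _)).2 (aP_le_bP hab w)
  have hwt0 : ∀ w : List (Alph m n), 0 ≤ (pP p w * aP a w ^ r) ^ t := fun w =>
    Real.rpow_nonneg (mul_nonneg (listProd_pos hp w).le
      (Real.rpow_nonneg (listProd_pos ha w).le r)) t
  have hxvmul : ∀ w w' : List (Alph m n),
      aP a (w ++ w') / bP b ((w ++ w').map Sigma.fst) =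
        (aP a w / bP b (w.map Sigma.fst)) * (aP a w' / bP b (w'.map Sigma.fst)) := by
    intro w w'
    rw [div_mul_div_comm]
    congr 1
    · simp [aP]
    · simp [bP]
  have hwtmul : ∀ w w' : List (Alph m n),
      (pP p (w ++ w') * aP a (w ++ w') ^ r) ^ t =
        (pP p w * aP a w ^ r) ^ t * (pP p w' * aP a w' ^ r) ^ t := by
    intro w w'
    have h1 : aP a (w ++ w') = aP a w * aP a w' := by simp [aP]
    have h2 : pP p (w ++ w') = pP p w * pP p w' := by simp [pP]
    have haw : (0:ℝ) ≤ aP a w := (listProd_pos ha w).le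
    have haw' : (0:ℝ) ≤ aP a w' := (listProd_pos ha w').le
    rw [h1, h2, Real.mul_rpow haw haw']
    rw [show pP p w * pP p w' * (aP a w ^ r * aP a w' ^ r) =
        (pP p w * aP a w ^ r) * (pP p w' * aP a w' ^ r) from by ring]
    exact Real.mul_rpow
      (mul_nonneg (listProd_pos hp w).le (Real.rpow_nonneg (listProd_pos ha w).le r))
      (mul_nonneg (listProd_pos hp w').le (Real.rpow_nonneg (listProd_pos ha w').le r))
  have key : ∀ x y : ℝ, 0 < x → x ≤ 1 → 0 < y → y ≤ 1 →
      c / (C * C) * Qt b p t hm0 hb x * Qt b p t hm0 hb y ≤ Qt b p t hm0 hb (x * y) ∧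
      Qt b p t hm0 hb (x * y) ≤ C / (c * c) * Qt b p t hm0 hb x * Qt b p t hm0 hb y := by
    intro x y hx0 hx1 hy0 hy1
    have hxy0 : 0 < x * y := mul_pos hx0 hy0
    have hxy1 : x * y ≤ 1 := by
      calc x * y ≤ 1 * 1 := mul_le_mul hx1 hy1 hy0.le zero_le_one
        _ = 1 := by ring
    obtain ⟨hx_l, hx_u⟩ := hQ x hx0 hx1
    obtain ⟨hy_l, hy_u⟩ := hQ y hy0 hy1
    obtain ⟨hxy_l, hxy_u⟩ := hQ (x * y) hxy0 hxy1
    have hsplit : (x * y) ^ (-u) = x ^ (-u) * y ^ (-u) := Real.mul_rpow hx0.le hy0.le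
    have hxr : 0 ≤ x ^ (-u) := Real.rpow_nonneg hx0.le _
    have hyr : 0 ≤ y ^ (-u) := Real.rpow_nonneg hy0.le _
    have hQx0 : 0 ≤ Qt b p t hm0 hb x := le_trans (mul_nonneg hc.le hxr) hx_l
    have hQy0 : 0 ≤ Qt b p t hm0 hb y := le_trans (mul_nonneg hc.le hyr) hy_l
    constructor
    · have h1 : c / (C * C) * Qt b p t hm0 hb x * Qt b p t hm0 hb y ≤
          c / (C * C) * (C * x ^ (-u)) * (C * y ^ (-u)) := by
        refine mul_le_mul (mul_le_mul_of_nonneg_left hx_u (by positivity)) hy_u hQy0 ?_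
        positivity
      have h2 : c / (C * C) * (C * x ^ (-u)) * (C * y ^ (-u)) = c * (x * y) ^ (-u) := by
        rw [hsplit]
        field_simp
      exact le_trans (h1.trans_eq h2) hxy_l
    · have hx' : x ^ (-u) ≤ Qt b p t hm0 hb x / c :=
        (le_div_iff₀ hc).2 (by rw [mul_comm]; exact hx_l)
      have hy' : y ^ (-u) ≤ Qt b p t hm0 hb y / c :=
        (le_div_iff₀ hc).2 (by rw [mul_comm]; exact hy_l)
      calc Qt b p t hm0 hb (x * y) ≤ C * (x * y) ^ (-u) := hxy_u
        _ = C * (x ^ (-u) * y ^ (-u)) := by rw [hsplit]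
        _ ≤ C * ((Qt b p t hm0 hb x / c) * (Qt b p t hm0 hb y / c)) :=
            mul_le_mul_of_nonneg_left
              (mul_le_mul hx' hy' hyr (div_nonneg hQx0 hc.le)) hC.le
        _ = C / (c * c) * Qt b p t hm0 hb x * Qt b p t hm0 hb y := by
            field_simp
  refine ⟨C / (c * c), c / (C * C), by positivity, by positivity, fun k l hk hl => ?_⟩
  have expand : Ih a b p r (k + l) t =
      ∑ w ∈ (List.finite_length_eq (Alph m n) k).toFinset,
        ∑ w' ∈ (List.finite_length_eq (Alph m n) l).toFinset,
          (pP p w * aP a w ^ r) ^ t * (pP p w' * aP a w' ^ r) ^ t *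
            Qt b p t hm0 hb ((aP a w / bP b (w.map Sigma.fst)) *
              (aP a w' / bP b (w'.map Sigma.fst))) := by
    rw [hIh (k + l), sum_len_append k l (fun v => (pP p v * aP a v ^ r) ^ t *
      Qt b p t hm0 hb (aP a v / bP b (v.map Sigma.fst)))]
    exact Finset.sum_congr rfl (fun w _ => Finset.sum_congr rfl (fun w' _ => by
      rw [hwtmul, hxvmul]))
  have prodform : ∀ D : ℝ, D * Ih a b p r k t * Ih a b p r l t =
      ∑ w ∈ (List.finite_length_eq (Alph m n) k).toFinset,
        ∑ w' ∈ (List.finite_length_eq (Alph m n) l).toFinset,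
          D * ((pP p w * aP a w ^ r) ^ t *
              Qt b p t hm0 hb (aP a w / bP b (w.map Sigma.fst)) *
            ((pP p w' * aP a w' ^ r) ^ t *
              Qt b p t hm0 hb (aP a w' / bP b (w'.map Sigma.fst)))) := by
    intro D
    rw [hIh k, hIh l, mul_assoc, Finset.sum_mul_sum, Finset.mul_sum]
    exact Finset.sum_congr rfl (fun w _ => by rw [Finset.mul_sum])
  have hQnn : ∀ x : ℝ, 0 < x → x ≤ 1 → 0 ≤ Qt b p t hm0 hb x := by
    intro x hx0 hx1
    exact le_trans (mul_nonneg hc.le (Real.rpow_nonneg hx0.le _)) (hQ x hx0 hx1).1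
  constructor
  · rw [expand, prodform]
    refine Finset.sum_le_sum (fun w _ => Finset.sum_le_sum (fun w' _ => ?_))
    have hkey := (key _ _ (hxv0 w) (hxv1 w) (hxv0 w') (hxv1 w')).1
    calc c / (C * C) * ((pP p w * aP a w ^ r) ^ t *
          Qt b p t hm0 hb (aP a w / bP b (w.map Sigma.fst)) *
          ((pP p w' * aP a w' ^ r) ^ t *
            Qt b p t hm0 hb (aP a w' / bP b (w'.map Sigma.fst))))
        = (pP p w * aP a w ^ r) ^ t * (pP p w' * aP a w' ^ r) ^ t *
            (c / (C * C) * Qt b p t hm0 hb (aP a w / bP b (w.map Sigma.fst)) *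
              Qt b p t hm0 hb (aP a w' / bP b (w'.map Sigma.fst))) := by ring
      _ ≤ (pP p w * aP a w ^ r) ^ t * (pP p w' * aP a w' ^ r) ^ t *
            Qt b p t hm0 hb ((aP a w / bP b (w.map Sigma.fst)) *
              (aP a w' / bP b (w'.map Sigma.fst))) :=
          mul_le_mul_of_nonneg_left hkey (mul_nonneg (hwt0 w) (hwt0 w'))
  · rw [expand, prodform]
    refine Finset.sum_le_sum (fun w _ => Finset.sum_le_sum (fun w' _ => ?_))
    have hkey := (key _ _ (hxv0 w) (hxv1 w) (hxv0 w') (hxv1 w')).2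
    calc (pP p w * aP a w ^ r) ^ t * (pP p w' * aP a w' ^ r) ^ t *
          Qt b p t hm0 hb ((aP a w / bP b (w.map Sigma.fst)) *
            (aP a w' / bP b (w'.map Sigma.fst)))
        ≤ (pP p w * aP a w ^ r) ^ t * (pP p w' * aP a w' ^ r) ^ t *
            (C / (c * c) * Qt b p t hm0 hb (aP a w / bP b (w.map Sigma.fst)) *
              Qt b p t hm0 hb (aP a w' / bP b (w'.map Sigma.fst))) :=
          mul_le_mul_of_nonneg_left hkey (mul_nonneg (hwt0 w) (hwt0 w'))
      _ = C / (c * c) * ((pP p w * aP a w ^ r) ^ t *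
            Qt b p t hm0 hb (aP a w / bP b (w.map Sigma.fst)) *
            ((pP p w' * aP a w' ^ r) ^ t *
              Qt b p t hm0 hb (aP a w' / bP b (w'.map Sigma.fst)))) := by ring


end

end LGQ
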